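/- For the noninteracting case (γ = 0), the Husimi distribution of the canonical ensemble at inverse temperature β for Hamiltonian H = −2J J_x on N bosons is P^{γ=0}_{N,T}(θ̄) = ((ξ−1)/(ξ^{N+1}−1)) · ((1+ξ+(ξ−1)cos θ̄)/2)^N, where ξ = e^{2βJ} and θ̄ is the angle between the Bloch vector of the coherent state and the x-axis. -/

import Mathlib

open scoped BigOperators
noncomputable section

/-- Two-mode bosonic Fock space: coefficients over number basis `|n₁,n₂⟩`. -/
abbrev Fock : Type := (ℕ × ℕ) →₀ ℂ

/-- Annihilation operator of mode 1: `a₁ |n₁,n₂⟩ = √n₁ |n₁-1,n₂⟩`. -/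
def a1 : Module.End ℂ Fock :=
  Finsupp.lsum ℂ fun m => (Real.sqrt m.1 : ℂ) • Finsupp.lsingle (m.1 - 1, m.2)

/-- Annihilation operator of mode 2. -/
def a2 : Module.End ℂ Fock :=
  Finsupp.lsum ℂ fun m => (Real.sqrt m.2 : ℂ) • Finsupp.lsingle (m.1, m.2 - 1)

/-- Creation operator of mode 1: `a₁† |n₁,n₂⟩ = √(n₁+1) |n₁+1,n₂⟩`. -/
def a1d : Module.End ℂ Fock :=
  Finsupp.lsum ℂ fun m => (Real.sqrt (m.1 + 1) : ℂ) • Finsupp.lsingle (m.1 + 1, m.2)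

/-- Creation operator of mode 2. -/
def a2d : Module.End ℂ Fock :=
  Finsupp.lsum ℂ fun m => (Real.sqrt (m.2 + 1) : ℂ) • Finsupp.lsingle (m.1, m.2 + 1)

/-- Pseudo-spin operators. -/
def Jx : Module.End ℂ Fock := (2 : ℂ)⁻¹ • (a1d * a2 + a2d * a1)
def Jy : Module.End ℂ Fock := (2 * Complex.I)⁻¹ • (a1d * a2 - a2d * a1)
def Jz : Module.End ℂ Fock := (2 : ℂ)⁻¹ • (a1d * a1 - a2d * a2)

/-- Total number operator. -/
def numOp : Module.End ℂ Fock := a1d * a1 + a2d * a2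

/-- Vacuum state `|0,0⟩`. -/
def vacuum : Fock := Finsupp.single (0, 0) 1

/-- Inner product on the Fock space (antilinear in the first argument). -/
def finner (f g : Fock) : ℂ := f.sum fun m c => (starRingEnd ℂ) c * g m

/-- Spin coherent state `|Ψ^N_{θ,φ}⟩`. -/
def coherent (N : ℕ) (θ φ : ℝ) : Fock :=
  ((Real.sqrt N.factorial : ℂ))⁻¹ •
    ((((Real.cos (θ / 2) : ℂ)) • a1d
        + (Complex.exp (Complex.I * φ) * (Real.sin (θ / 2) : ℂ)) • a2d) ^ N) vacuum

/-! ### Basic lemmas on `finner` -/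

open Finsupp Complex

lemma finner_single_left (p : ℕ × ℕ) (c : ℂ) (g : Fock) :
    finner (Finsupp.single p c) g = (starRingEnd ℂ) c * g p := by
  unfold finner
  rw [Finsupp.sum_single_index]
  simp

lemma finner_single_right (g : Fock) (p : ℕ × ℕ) (c : ℂ) :
    finner g (Finsupp.single p c) = (starRingEnd ℂ) (g p) * c := by
  unfold finner
  rw [Finsupp.sum]
  rcases eq_or_ne (g p) 0 with h | h
  · rw [Finset.sum_eq_zero, h]
    · simp
    · intro m hm
      have : m ≠ p := fun e => (Finsupp.mem_support_iff.mp hm) (e ▸ h)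
      simp [Finsupp.single_apply, Ne.symm this]
  · rw [Finset.sum_eq_single p]
    · simp [Finsupp.single_apply]
    · intro m _ hmp; simp [Finsupp.single_apply, Ne.symm hmp]
    · intro hp; exact absurd (Finsupp.mem_support_iff.mpr h) hp

lemma finner_add_left (f f' g : Fock) :
    finner (f + f') g = finner f g + finner f' g := by
  unfold finner
  rw [Finsupp.sum_add_index] <;> intros <;> simp [add_mul]

lemma finner_smul_left (z : ℂ) (f g : Fock) :
    finner (z • f) g = (starRingEnd ℂ) z * finner f g := by
  unfold finner
  rw [Finsupp.sum_smul_index' (by intro i; simp)]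
  rw [Finsupp.mul_sum]
  congr 1; ext m c; simp [mul_assoc]

lemma finner_zero_left (g : Fock) : finner 0 g = 0 := by
  unfold finner; simp

lemma finner_zero_right (f : Fock) : finner f 0 = 0 := by
  unfold finner; simp

lemma finner_add_right (f g g' : Fock) :
    finner f (g + g') = finner f g + finner f g' := by
  unfold finner
  rw [← Finsupp.sum_add]
  congr 1; ext m c; simp [mul_add]

lemma finner_smul_right (z : ℂ) (f g : Fock) :
    finner f (z • g) = z * finner f g := by
  unfold finner
  rw [Finsupp.mul_sum]
  congr 1; ext m c
  simp; ring

lemma finner_sum_right {ι : Type*} (s : Finset ι) (f : Fock) (g : ι → Fock) :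
    finner f (∑ i ∈ s, g i) = ∑ i ∈ s, finner f (g i) := by
  classical
  induction s using Finset.induction_on with
  | empty => simp [finner_zero_right]
  | @insert a t h ih => simp [Finset.sum_insert h, finner_add_right, ih]

lemma finner_sub_left (f f' g : Fock) :
    finner (f - f') g = finner f g - finner f' g := by
  rw [sub_eq_add_neg, finner_add_left,
    show (-f' : Fock) = (-1 : ℂ) • f' by simp, finner_smul_left]
  simp [sub_eq_add_neg]

lemma finner_sub_right (f g g' : Fock) :
    finner f (g - g') = finner f g - finner f g' := by
  rw [sub_eq_add_neg, finner_add_right,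
    show (-g' : Fock) = (-1 : ℂ) • g' by simp, finner_smul_right]
  ring

/-! ### Action of the mode operators -/

lemma a1_single (p : ℕ × ℕ) (c : ℂ) :
    a1 (Finsupp.single p c) = (Real.sqrt p.1 : ℂ) • Finsupp.single (p.1 - 1, p.2) c := by
  simp [a1]

lemma a2_single (p : ℕ × ℕ) (c : ℂ) :
    a2 (Finsupp.single p c) = (Real.sqrt p.2 : ℂ) • Finsupp.single (p.1, p.2 - 1) c := by
  simp [a2]

lemma a1d_single (p : ℕ × ℕ) (c : ℂ) :
    a1d (Finsupp.single p c) = (Real.sqrt (p.1 + 1) : ℂ) • Finsupp.single (p.1 + 1, p.2) c := by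
  simp [a1d]

lemma a2d_single (p : ℕ × ℕ) (c : ℂ) :
    a2d (Finsupp.single p c) = (Real.sqrt (p.2 + 1) : ℂ) • Finsupp.single (p.1, p.2 + 1) c := by
  simp [a2d]

/-- pointwise coefficient of `a1 g` -/
lemma a1_apply_coe (g : Fock) (m : ℕ × ℕ) :
    (a1 g) m = (Real.sqrt (m.1 + 1) : ℂ) * g (m.1 + 1, m.2) := by
  rw [a1, Finsupp.lsum_apply, Finsupp.sum_apply]
  rw [Finsupp.sum]
  rcases eq_or_ne (g (m.1 + 1, m.2)) 0 with h | h
  · rw [Finset.sum_eq_zero, h, mul_zero]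
    intro q hq
    rcases q with ⟨q1, q2⟩
    simp only [LinearMap.smul_apply, Finsupp.lsingle_apply, Finsupp.smul_apply,
      Finsupp.single_apply]
    by_cases he : ((q1 - 1 : ℕ), q2) = m
    · have hq1 : q1 ≠ m.1 + 1 ∨ q2 ≠ m.2 := by
        by_contra hc
        push_neg at hc
        exact (Finsupp.mem_support_iff.mp hq) (by rw [hc.1, hc.2] at *; exact h)
      have hq2 : q2 = m.2 := by cases m; simpa using congrArg Prod.snd he
      have hq1' : q1 ≠ m.1 + 1 := by tauto
      have : q1 - 1 = m.1 := by cases m; simpa using congrArg Prod.fst he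
      have hq0 : q1 = 0 := by omega
      simp [hq0]
    · simp [he]
  · rw [Finset.sum_eq_single (m.1 + 1, m.2)]
    · simp
    · intro q hq hne
      rcases q with ⟨q1, q2⟩
      simp only [LinearMap.smul_apply, Finsupp.lsingle_apply, Finsupp.smul_apply,
        Finsupp.single_apply]
      by_cases he : ((q1 - 1 : ℕ), q2) = m
      · have hq2 : q2 = m.2 := by cases m; simpa using congrArg Prod.snd he
        have : q1 - 1 = m.1 := by cases m; simpa using congrArg Prod.fst he
        have hq0 : q1 = 0 := by
          rcases Nat.eq_zero_or_pos q1 with h0 | h0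
          · exact h0
          · exfalso; apply hne; rw [hq2]; congr 1; omega
        simp [hq0]
      · simp [he]
    · intro hp; exact absurd (Finsupp.mem_support_iff.mpr h) hp

lemma a2_apply_coe (g : Fock) (m : ℕ × ℕ) :
    (a2 g) m = (Real.sqrt (m.2 + 1) : ℂ) * g (m.1, m.2 + 1) := by
  rw [a2, Finsupp.lsum_apply, Finsupp.sum_apply]
  rw [Finsupp.sum]
  rcases eq_or_ne (g (m.1, m.2 + 1)) 0 with h | h
  · rw [Finset.sum_eq_zero, h, mul_zero]
    intro q hq
    rcases q with ⟨q1, q2⟩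
    simp only [LinearMap.smul_apply, Finsupp.lsingle_apply, Finsupp.smul_apply,
      Finsupp.single_apply]
    by_cases he : (q1, (q2 - 1 : ℕ)) = m
    · have hq1 : q1 = m.1 := by cases m; simpa using congrArg Prod.fst he
      have : q2 - 1 = m.2 := by cases m; simpa using congrArg Prod.snd he
      have hq2' : q2 ≠ m.2 + 1 := by
        intro hc
        exact (Finsupp.mem_support_iff.mp hq) (by rw [hq1, hc] at *; exact h)
      have hq0 : q2 = 0 := by omega
      simp [hq0]
    · simp [he]
  · rw [Finset.sum_eq_single (m.1, m.2 + 1)]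
    · simp
    · intro q hq hne
      rcases q with ⟨q1, q2⟩
      simp only [LinearMap.smul_apply, Finsupp.lsingle_apply, Finsupp.smul_apply,
        Finsupp.single_apply]
      by_cases he : (q1, (q2 - 1 : ℕ)) = m
      · have hq1 : q1 = m.1 := by cases m; simpa using congrArg Prod.fst he
        have : q2 - 1 = m.2 := by cases m; simpa using congrArg Prod.snd he
        have hq0 : q2 = 0 := by
          rcases Nat.eq_zero_or_pos q2 with h0 | h0
          · exact h0
          · exfalso; apply hne; rw [hq1]; congr 1; omega
        simp [hq0]
      · simp [he]
    · intro hp; exact absurd (Finsupp.mem_support_iff.mpr h) hp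

/-! ### Adjoint relations -/

lemma finner_a1d_left (f g : Fock) : finner (a1d f) g = finner f (a1 g) := by
  induction f using Finsupp.induction_linear with
  | zero => simp [finner_zero_left]
  | add f f' hf hf' => rw [map_add, finner_add_left, finner_add_left, hf, hf']
  | single p c =>
    rw [a1d_single, finner_smul_left, finner_single_left, finner_single_left,
      a1_apply_coe]
    have : ((Real.sqrt (p.1 + 1) : ℝ) : ℂ).im = 0 := by simp
    rw [Complex.conj_ofReal]
    ring

lemma finner_a2d_left (f g : Fock) : finner (a2d f) g = finner f (a2 g) := by
  induction f using Finsupp.induction_linear with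
  | zero => simp [finner_zero_left]
  | add f f' hf hf' => rw [map_add, finner_add_left, finner_add_left, hf, hf']
  | single p c =>
    rw [a2d_single, finner_smul_left, finner_single_left, finner_single_left,
      a2_apply_coe]
    rw [Complex.conj_ofReal]
    ring


lemma a1d_apply_coe (g : Fock) (m : ℕ × ℕ) :
    (a1d g) m = (Real.sqrt m.1 : ℂ) * g (m.1 - 1, m.2) := by
  rw [a1d, Finsupp.lsum_apply, Finsupp.sum_apply]
  rw [Finsupp.sum]
  rcases m with ⟨m1, m2⟩
  rcases Nat.eq_zero_or_pos m1 with h0 | h0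
  · subst h0
    rw [Finset.sum_eq_zero]
    · simp
    · intro q hq
      simp only [LinearMap.smul_apply, Finsupp.lsingle_apply, Finsupp.smul_apply,
        Finsupp.single_apply]
      have : (q.1 + 1, q.2) ≠ ((0 : ℕ), m2) := by
        intro hc; exact Nat.succ_ne_zero q.1 ((Prod.mk.injEq _ _ _ _).mp hc).1
      simp [this]
  · rcases eq_or_ne (g (m1 - 1, m2)) 0 with h | h
    · rw [Finset.sum_eq_zero, h, mul_zero]
      intro q hq
      simp only [LinearMap.smul_apply, Finsupp.lsingle_apply, Finsupp.smul_apply,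
        Finsupp.single_apply]
      by_cases he : (q.1 + 1, q.2) = (m1, m2)
      · have h1 : q.1 + 1 = m1 := ((Prod.mk.injEq _ _ _ _).mp he).1
        have h2 : q.2 = m2 := ((Prod.mk.injEq _ _ _ _).mp he).2
        have : q = (m1 - 1, m2) := by
          rcases q with ⟨q1, q2⟩
          simp only [Prod.mk.injEq]; omega
        rw [this] at hq
        exact absurd h (Finsupp.mem_support_iff.mp hq)
      · simp [he]
    · rw [Finset.sum_eq_single (m1 - 1, m2)]
      · have h1 : m1 - 1 + 1 = m1 := by omega
        simp only [LinearMap.smul_apply, Finsupp.lsingle_apply, Finsupp.smul_apply,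
          Finsupp.single_apply, h1]
        have h2 : ((m1 - 1 : ℕ) : ℝ) + 1 = (m1 : ℝ) := by
          exact_mod_cast congrArg (Nat.cast : ℕ → ℝ) h1
        simp [h2]
      · intro q hq hne
        simp only [LinearMap.smul_apply, Finsupp.lsingle_apply, Finsupp.smul_apply,
          Finsupp.single_apply]
        by_cases he : (q.1 + 1, q.2) = (m1, m2)
        · exfalso; apply hne
          have h1 : q.1 + 1 = m1 := ((Prod.mk.injEq _ _ _ _).mp he).1
          have h2 : q.2 = m2 := ((Prod.mk.injEq _ _ _ _).mp he).2
          rcases q with ⟨q1, q2⟩; simp only [Prod.mk.injEq]; omega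
        · simp [he]
      · intro hp; exact absurd (Finsupp.mem_support_iff.mpr h) hp

lemma a2d_apply_coe (g : Fock) (m : ℕ × ℕ) :
    (a2d g) m = (Real.sqrt m.2 : ℂ) * g (m.1, m.2 - 1) := by
  rw [a2d, Finsupp.lsum_apply, Finsupp.sum_apply]
  rw [Finsupp.sum]
  rcases m with ⟨m1, m2⟩
  rcases Nat.eq_zero_or_pos m2 with h0 | h0
  · subst h0
    rw [Finset.sum_eq_zero]
    · simp
    · intro q hq
      simp only [LinearMap.smul_apply, Finsupp.lsingle_apply, Finsupp.smul_apply,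
        Finsupp.single_apply]
      have : (q.1, q.2 + 1) ≠ (m1, (0 : ℕ)) := by
        intro hc; exact Nat.succ_ne_zero q.2 ((Prod.mk.injEq _ _ _ _).mp hc).2
      simp [this]
  · rcases eq_or_ne (g (m1, m2 - 1)) 0 with h | h
    · rw [Finset.sum_eq_zero, h, mul_zero]
      intro q hq
      simp only [LinearMap.smul_apply, Finsupp.lsingle_apply, Finsupp.smul_apply,
        Finsupp.single_apply]
      by_cases he : (q.1, q.2 + 1) = (m1, m2)
      · have h1 : q.1 = m1 := ((Prod.mk.injEq _ _ _ _).mp he).1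
        have h2 : q.2 + 1 = m2 := ((Prod.mk.injEq _ _ _ _).mp he).2
        have : q = (m1, m2 - 1) := by
          rcases q with ⟨q1, q2⟩
          simp only [Prod.mk.injEq]; omega
        rw [this] at hq
        exact absurd h (Finsupp.mem_support_iff.mp hq)
      · simp [he]
    · rw [Finset.sum_eq_single (m1, m2 - 1)]
      · have h1 : m2 - 1 + 1 = m2 := by omega
        simp only [LinearMap.smul_apply, Finsupp.lsingle_apply, Finsupp.smul_apply,
          Finsupp.single_apply, h1]
        have h2 : ((m2 - 1 : ℕ) : ℝ) + 1 = (m2 : ℝ) := by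
          exact_mod_cast congrArg (Nat.cast : ℕ → ℝ) h1
        simp [h2]
      · intro q hq hne
        simp only [LinearMap.smul_apply, Finsupp.lsingle_apply, Finsupp.smul_apply,
          Finsupp.single_apply]
        by_cases he : (q.1, q.2 + 1) = (m1, m2)
        · exfalso; apply hne
          have h1 : q.1 = m1 := ((Prod.mk.injEq _ _ _ _).mp he).1
          have h2 : q.2 + 1 = m2 := ((Prod.mk.injEq _ _ _ _).mp he).2
          rcases q with ⟨q1, q2⟩; simp only [Prod.mk.injEq]; omega
        · simp [he]
      · intro hp; exact absurd (Finsupp.mem_support_iff.mpr h) hp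

lemma finner_a1_left (f g : Fock) : finner (a1 f) g = finner f (a1d g) := by
  induction f using Finsupp.induction_linear with
  | zero => simp [finner_zero_left]
  | add f f' hf hf' => rw [map_add, finner_add_left, finner_add_left, hf, hf']
  | single p c =>
    rw [a1_single, finner_smul_left, finner_single_left, finner_single_left,
      a1d_apply_coe, Complex.conj_ofReal]
    ring

lemma finner_a2_left (f g : Fock) : finner (a2 f) g = finner f (a2d g) := by
  induction f using Finsupp.induction_linear with
  | zero => simp [finner_zero_left]
  | add f f' hf hf' => rw [map_add, finner_add_left, finner_add_left, hf, hf']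
  | single p c =>
    rw [a2_single, finner_smul_left, finner_single_left, finner_single_left,
      a2d_apply_coe, Complex.conj_ofReal]
    ring

/-! ### Operator algebra -/

lemma end_ext {f g : Module.End ℂ Fock}
    (h : ∀ p c, f (Finsupp.single p c) = g (Finsupp.single p c)) : f = g :=
  Finsupp.lhom_ext h

lemma endsub (f g : Module.End ℂ Fock) : f - g = f + (-1 : ℂ) • g := by
  have h := sub_eq_add_neg f g
  have h2 : -g = (-1 : ℂ) • g := (neg_one_smul ℂ g).symm
  exact h.trans (by rw [h2])

lemma focksub (f g : Fock) : f - g = f + (-1 : ℂ) • g := by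
  have h := sub_eq_add_neg f g
  have h2 : -g = (-1 : ℂ) • g := (neg_one_smul ℂ g).symm
  exact h.trans (by rw [h2])

lemma sqrtc_mul_self (n : ℕ) :
    (Real.sqrt n : ℂ) * (Real.sqrt n : ℂ) = (n : ℂ) := by
  rw [← Complex.ofReal_mul, Real.mul_self_sqrt (Nat.cast_nonneg n)]
  norm_cast

lemma ccr1 : a1 * a1d = a1d * a1 + 1 := by
  apply end_ext
  intro ⟨n1, n2⟩ c
  simp only [LinearMap.add_apply, Module.End.mul_apply, Module.End.one_apply,
    a1_single, a1d_single, map_smul, smul_smul]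
  rcases Nat.eq_zero_or_pos n1 with h0 | h0
  · subst h0
    simp [sqrtc_mul_self]
  · have h1 : n1 - 1 + 1 = n1 := by omega
    have h2 : n1 + 1 - 1 = n1 := by omega
    rw [h1, h2]
    have e1 : (Real.sqrt ((n1:ℝ) + 1) : ℂ) * (Real.sqrt ((n1:ℕ) + 1 : ℕ) : ℂ)
        = ((n1 : ℂ) + 1) := by
      have := sqrtc_mul_self (n1 + 1)
      push_cast at this ⊢
      linear_combination this
    have e2 : (Real.sqrt (n1:ℝ) : ℂ) * (Real.sqrt (((n1:ℕ) - 1 : ℕ) + 1 : ℝ) : ℂ)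
        = (n1 : ℂ) := by
      have h3 : (((n1 - 1 : ℕ) : ℝ) + 1) = (n1 : ℝ) := by
        exact_mod_cast congrArg (Nat.cast : ℕ → ℝ) h1
      rw [h3, sqrtc_mul_self]
    rw [e1, e2, add_smul, one_smul]

lemma ccr2 : a2 * a2d = a2d * a2 + 1 := by
  apply end_ext
  intro ⟨n1, n2⟩ c
  simp only [LinearMap.add_apply, Module.End.mul_apply, Module.End.one_apply,
    a2_single, a2d_single, map_smul, smul_smul]
  rcases Nat.eq_zero_or_pos n2 with h0 | h0
  · subst h0
    simp [sqrtc_mul_self]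
  · have h1 : n2 - 1 + 1 = n2 := by omega
    have h2 : n2 + 1 - 1 = n2 := by omega
    rw [h1, h2]
    have e1 : (Real.sqrt ((n2:ℝ) + 1) : ℂ) * (Real.sqrt ((n2:ℕ) + 1 : ℕ) : ℂ)
        = ((n2 : ℂ) + 1) := by
      have := sqrtc_mul_self (n2 + 1)
      push_cast at this ⊢
      linear_combination this
    have e2 : (Real.sqrt (n2:ℝ) : ℂ) * (Real.sqrt (((n2:ℕ) - 1 : ℕ) + 1 : ℝ) : ℂ)
        = (n2 : ℂ) := by
      have h3 : (((n2 - 1 : ℕ) : ℝ) + 1) = (n2 : ℝ) := by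
        exact_mod_cast congrArg (Nat.cast : ℕ → ℝ) h1
      rw [h3, sqrtc_mul_self]
    rw [e1, e2, add_smul, one_smul]

lemma comm_a1_a2d : a1 * a2d = a2d * a1 := by
  apply end_ext
  intro ⟨n1, n2⟩ c
  simp only [Module.End.mul_apply, a1_single, a2d_single, map_smul, smul_smul]
  rw [mul_comm]

lemma comm_a2_a1d : a2 * a1d = a1d * a2 := by
  apply end_ext
  intro ⟨n1, n2⟩ c
  simp only [Module.End.mul_apply, a1_single, a2_single, a1d_single, a2d_single,
    map_smul, smul_smul]
  rw [mul_comm]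

lemma comm_a1d_a2d : a1d * a2d = a2d * a1d := by
  apply end_ext
  intro ⟨n1, n2⟩ c
  simp only [Module.End.mul_apply, a1d_single, a2d_single, map_smul, smul_smul]
  rw [mul_comm]

/-! ### Rotated modes -/

def b1 : Module.End ℂ Fock := ((Real.sqrt 2 : ℂ))⁻¹ • (a1 + a2)
def b2 : Module.End ℂ Fock := ((Real.sqrt 2 : ℂ))⁻¹ • (a1 + (-1 : ℂ) • a2)
def b1d : Module.End ℂ Fock := ((Real.sqrt 2 : ℂ))⁻¹ • (a1d + a2d)
def b2d : Module.End ℂ Fock := ((Real.sqrt 2 : ℂ))⁻¹ • (a1d + (-1 : ℂ) • a2d)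

lemma sqrt2c_sq : (Real.sqrt 2 : ℂ) * (Real.sqrt 2 : ℂ) = 2 := by
  rw [← Complex.ofReal_mul, Real.mul_self_sqrt (by norm_num)]
  norm_num

lemma sqrt2c_ne : (Real.sqrt 2 : ℂ) ≠ 0 := by
  simp [Real.sqrt_eq_zero']

lemma smul2_mul (P Q : Module.End ℂ Fock) :
    ((Real.sqrt 2 : ℂ))⁻¹ • P * ((Real.sqrt 2 : ℂ))⁻¹ • Q = (2 : ℂ)⁻¹ • (P * Q) := by
  rw [smul_mul_smul_comm, ← mul_inv, sqrt2c_sq]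

lemma ccrb1 : b1 * b1d = b1d * b1 + 1 := by
  unfold b1 b1d
  have expand : (a1 + a2) * (a1d + a2d) = (a1d + a2d) * (a1 + a2) + (2 : ℂ) • 1 := by
    simp only [add_mul, mul_add, ccr1, ccr2, comm_a1_a2d, comm_a2_a1d]
    module
  rw [smul2_mul, smul2_mul, expand, smul_add, smul_smul,
    show ((2:ℂ)⁻¹ * 2) = 1 by norm_num, one_smul]

lemma ccrb2 : b2 * b2d = b2d * b2 + 1 := by
  unfold b2 b2d
  have expand : (a1 + (-1:ℂ) • a2) * (a1d + (-1:ℂ) • a2d)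
      = (a1d + (-1:ℂ) • a2d) * (a1 + (-1:ℂ) • a2) + (2 : ℂ) • 1 := by
    simp only [add_mul, mul_add, smul_mul_assoc, mul_smul_comm,
      ccr1, ccr2, comm_a1_a2d, comm_a2_a1d]
    module
  rw [smul2_mul, smul2_mul, expand, smul_add, smul_smul,
    show ((2:ℂ)⁻¹ * 2) = 1 by norm_num, one_smul]

lemma comm_b1_b2d : b1 * b2d = b2d * b1 := by
  unfold b1 b2d
  have h : (a1 + a2) * (a1d + (-1:ℂ) • a2d) = (a1d + (-1:ℂ) • a2d) * (a1 + a2) := by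
    simp only [add_mul, mul_add, smul_mul_assoc, mul_smul_comm,
      ccr1, ccr2, comm_a1_a2d, comm_a2_a1d]
    module
  rw [smul2_mul, smul2_mul, h]

lemma comm_b2_b1d : b2 * b1d = b1d * b2 := by
  unfold b2 b1d
  have h : (a1 + (-1:ℂ) • a2) * (a1d + a2d) = (a1d + a2d) * (a1 + (-1:ℂ) • a2) := by
    simp only [add_mul, mul_add, smul_mul_assoc, mul_smul_comm,
      ccr1, ccr2, comm_a1_a2d, comm_a2_a1d]
    module
  rw [smul2_mul, smul2_mul, h]

lemma comm_b1d_b2d : b1d * b2d = b2d * b1d := by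
  unfold b1d b2d
  have h : (a1d + a2d) * (a1d + (-1:ℂ) • a2d) = (a1d + (-1:ℂ) • a2d) * (a1d + a2d) := by
    simp only [add_mul, mul_add, smul_mul_assoc, mul_smul_comm, comm_a1d_a2d]
    module
  rw [smul2_mul, smul2_mul, h]

lemma Jx_b : Jx = (2 : ℂ)⁻¹ • (b1d * b1 - b2d * b2) := by
  unfold Jx b1 b2 b1d b2d
  rw [endsub, smul2_mul, smul2_mul]
  simp only [add_mul, mul_add, smul_mul_assoc, mul_smul_comm, smul_add, smul_smul,
    comm_a2_a1d]
  module

lemma numOp_b : numOp = b1d * b1 + b2d * b2 := by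
  unfold numOp b1 b2 b1d b2d
  rw [smul2_mul, smul2_mul]
  simp only [add_mul, mul_add, smul_mul_assoc, mul_smul_comm, smul_add, smul_smul,
    comm_a2_a1d]
  module

lemma a1_vacuum : a1 vacuum = 0 := by
  unfold vacuum
  rw [a1_single]
  norm_num

lemma a2_vacuum : a2 vacuum = 0 := by
  unfold vacuum
  rw [a2_single]
  norm_num

lemma b1_vacuum : b1 vacuum = 0 := by
  unfold b1
  simp [a1_vacuum, a2_vacuum]

lemma b2_vacuum : b2 vacuum = 0 := by
  unfold b2
  simp [a1_vacuum, a2_vacuum]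

/-! ### adjoint relations for the rotated modes -/

lemma finner_b1d_left (f g : Fock) : finner (b1d f) g = finner f (b1 g) := by
  unfold b1 b1d
  simp only [LinearMap.smul_apply, LinearMap.add_apply,
    finner_smul_left, finner_smul_right, finner_add_left, finner_add_right,
    finner_a1d_left, finner_a2d_left, finner_a1_left, finner_a2_left,
    map_inv₀, Complex.conj_ofReal]

lemma finner_b2d_left (f g : Fock) : finner (b2d f) g = finner f (b2 g) := by
  unfold b2 b2d
  simp only [LinearMap.smul_apply, LinearMap.add_apply,
    finner_smul_left, finner_smul_right, finner_add_left, finner_add_right,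
    finner_a1d_left, finner_a2d_left, finner_a1_left, finner_a2_left,
    map_inv₀, Complex.conj_ofReal, map_neg, map_one]

lemma finner_b1_left (f g : Fock) : finner (b1 f) g = finner f (b1d g) := by
  unfold b1 b1d
  simp only [LinearMap.smul_apply, LinearMap.add_apply,
    finner_smul_left, finner_smul_right, finner_add_left, finner_add_right,
    finner_a1d_left, finner_a2d_left, finner_a1_left, finner_a2_left,
    map_inv₀, Complex.conj_ofReal]

lemma finner_b2_left (f g : Fock) : finner (b2 f) g = finner f (b2d g) := by
  unfold b2 b2d
  simp only [LinearMap.smul_apply, LinearMap.add_apply,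
    finner_smul_left, finner_smul_right, finner_add_left, finner_add_right,
    finner_a1d_left, finner_a2d_left, finner_a1_left, finner_a2_left,
    map_inv₀, Complex.conj_ofReal, map_neg, map_one]

/-! ### Number states for the rotated modes -/

lemma ann_pow_succ (A B : Module.End ℂ Fock) (h : B * A = A * B + 1) (v : Fock)
    (hv : B v = 0) : ∀ k : ℕ, B ((A ^ (k + 1)) v) = ((k + 1 : ℕ) : ℂ) • (A ^ k) v := by
  intro k
  induction k with
  | zero =>
    rw [pow_one, pow_zero, Module.End.one_apply]
    have : B (A v) = (B * A) v := rfl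
    rw [this, h]
    simp [hv]
  | succ k ih =>
    rw [pow_succ' A (k + 1), Module.End.mul_apply]
    have h1 : B (A ((A ^ (k+1)) v)) = (B * A) ((A ^ (k+1)) v) := rfl
    rw [h1, h, LinearMap.add_apply, Module.End.mul_apply, Module.End.one_apply, ih,
      map_smul]
    have h2 : A ((A ^ k) v) = (A ^ (k + 1)) v := by rw [pow_succ']; rfl
    rw [h2]
    push_cast
    module

lemma comm_pow (A B : Module.End ℂ Fock) (h : B * A = A * B) (v : Fock) (k : ℕ) :
    B ((A ^ k) v) = (A ^ k) (B v) := by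
  induction k with
  | zero => simp
  | succ k ih =>
    rw [pow_succ' A k, Module.End.mul_apply, Module.End.mul_apply]
    have h1 : B (A ((A ^ k) v)) = (B * A) ((A ^ k) v) := rfl
    rw [h1, h, Module.End.mul_apply, ih]

/-- `ω k l = b1d^k b2d^l |0⟩`. -/
def omg (k l : ℕ) : Fock := (b1d ^ k) ((b2d ^ l) vacuum)

lemma b1_omg_zero (l : ℕ) : b1 (omg 0 l) = 0 := by
  unfold omg
  rw [pow_zero, Module.End.one_apply, comm_pow _ _ comm_b1_b2d, b1_vacuum, map_zero]

lemma b1_omg_succ (k l : ℕ) : b1 (omg (k + 1) l) = ((k + 1 : ℕ) : ℂ) • omg k l :=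
  ann_pow_succ b1d b1 ccrb1 _ (by rw [comm_pow _ _ comm_b1_b2d, b1_vacuum, map_zero]) k

lemma b2_omg_zero (k : ℕ) : b2 (omg k 0) = 0 := by
  unfold omg
  rw [pow_zero, Module.End.one_apply, comm_pow _ _ comm_b2_b1d, b2_vacuum, map_zero]

lemma b2_omg_succ (k l : ℕ) : b2 (omg k (l + 1)) = ((l + 1 : ℕ) : ℂ) • omg k l := by
  unfold omg
  rw [comm_pow _ _ comm_b2_b1d, ann_pow_succ b2d b2 ccrb2 _ b2_vacuum, map_smul]

lemma b1d_omg (k l : ℕ) : b1d (omg k l) = omg (k + 1) l := by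
  unfold omg
  rw [pow_succ' b1d k, Module.End.mul_apply]

lemma b2d_omg (k l : ℕ) : b2d (omg k l) = omg k (l + 1) := by
  unfold omg
  rw [comm_pow _ _ comm_b1d_b2d.symm, pow_succ' b2d l, Module.End.mul_apply]

lemma finner_vacuum : finner vacuum vacuum = 1 := by
  unfold vacuum
  rw [finner_single_left]
  simp

lemma finner_b2pow (l : ℕ) : ∀ l' : ℕ, finner ((b2d ^ l) vacuum) ((b2d ^ l') vacuum)
    = if l = l' then (l.factorial : ℂ) else 0 := by
  induction l with
  | zero =>
    intro l'
    cases l' with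
    | zero => simpa using finner_vacuum
    | succ l' =>
      rw [pow_zero, Module.End.one_apply, pow_succ' b2d l', Module.End.mul_apply,
        ← finner_b2_left, b2_vacuum, finner_zero_left]
      simp
  | succ l ih =>
    intro l'
    rw [pow_succ' b2d l, Module.End.mul_apply, finner_b2d_left]
    cases l' with
    | zero =>
      rw [pow_zero, Module.End.one_apply, b2_vacuum, finner_zero_right]
      simp
    | succ l' =>
      rw [ann_pow_succ b2d b2 ccrb2 _ b2_vacuum, finner_smul_right, ih]
      by_cases h : l = l'
      · subst h
        simp [Nat.factorial_succ]
        try push_cast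
        try ring
      · have : l + 1 ≠ l' + 1 := by omega
        simp [h, this]

lemma finner_omg (l l' : ℕ) : ∀ k k' : ℕ, finner (omg k l) (omg k' l')
    = if k = k' ∧ l = l' then ((k.factorial * l.factorial : ℕ) : ℂ) else 0 := by
  intro k
  induction k with
  | zero =>
    intro k'
    cases k' with
    | zero =>
      unfold omg
      simp only [pow_zero, Module.End.one_apply]
      rw [finner_b2pow]
      by_cases h : l = l' <;> simp [h]
    | succ k' =>
      have : omg (k' + 1) l' = b1d (omg k' l') := (b1d_omg k' l').symm
      rw [this, ← finner_b1_left, b1_omg_zero, finner_zero_left]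
      simp
  | succ k ih =>
    intro k'
    have : omg (k + 1) l = b1d (omg k l) := (b1d_omg k l).symm
    rw [this, finner_b1d_left]
    cases k' with
    | zero =>
      rw [b1_omg_zero, finner_zero_right]
      simp
    | succ k' =>
      rw [b1_omg_succ, finner_smul_right, ih]
      by_cases h : k = k'
      · subst h
        by_cases h2 : l = l'
        · subst h2
          simp [Nat.factorial_succ]
          try push_cast
          try ring
        · simp [h2]
      · have : k + 1 ≠ k' + 1 := by omega
        simp [h, this]

lemma b1d_b1_omg (k l : ℕ) : b1d (b1 (omg k l)) = (k : ℂ) • omg k l := by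
  cases k with
  | zero => rw [b1_omg_zero, map_zero]; simp
  | succ k => rw [b1_omg_succ, map_smul, b1d_omg]

lemma b2d_b2_omg (k l : ℕ) : b2d (b2 (omg k l)) = (l : ℂ) • omg k l := by
  cases l with
  | zero => rw [b2_omg_zero, map_zero]; simp
  | succ l => rw [b2_omg_succ, map_smul, b2d_omg]

lemma Jx_omg (k l : ℕ) : Jx (omg k l) = (((k : ℂ) - l) / 2) • omg k l := by
  rw [Jx_b, LinearMap.smul_apply, LinearMap.sub_apply, Module.End.mul_apply,
    Module.End.mul_apply, b1d_b1_omg, b2d_b2_omg]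
  rw [smul_sub, smul_smul, smul_smul]
  rw [div_eq_mul_inv]
  module

lemma numOp_omg (k l : ℕ) : numOp (omg k l) = ((k + l : ℕ) : ℂ) • omg k l := by
  rw [numOp_b, LinearMap.add_apply, Module.End.mul_apply, Module.End.mul_apply,
    b1d_b1_omg, b2d_b2_omg]
  push_cast
  module

/-! ### Conjugate symmetry -/

lemma finner_conj (f g : Fock) : finner f g = (starRingEnd ℂ) (finner g f) := by
  induction f using Finsupp.induction_linear with
  | zero => simp [finner_zero_left, finner_zero_right]
  | add f f' hf hf' => rw [finner_add_left, finner_add_right, map_add, hf, hf']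
  | single p c =>
    rw [finner_single_left, finner_single_right, map_mul, Complex.conj_conj,
      mul_comm]

/-! ### Expansion of the coherent state -/

def uc (θ φ : ℝ) : ℂ :=
  ((Real.sqrt 2 : ℂ))⁻¹ * ((Real.cos (θ / 2) : ℂ)
    + Complex.exp (Complex.I * φ) * (Real.sin (θ / 2) : ℂ))

def vc (θ φ : ℝ) : ℂ :=
  ((Real.sqrt 2 : ℂ))⁻¹ * ((Real.cos (θ / 2) : ℂ)
    - Complex.exp (Complex.I * φ) * (Real.sin (θ / 2) : ℂ))

lemma op_eq (θ φ : ℝ) :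
    (Real.cos (θ / 2) : ℂ) • a1d
      + (Complex.exp (Complex.I * φ) * (Real.sin (θ / 2) : ℂ)) • a2d
    = uc θ φ • b1d + vc θ φ • b2d := by
  unfold uc vc b1d b2d
  set cc := (Real.cos (θ / 2) : ℂ) with hcc
  set ss := (Real.sin (θ / 2) : ℂ) with hss
  set ee := Complex.exp (Complex.I * φ) with hee
  set sq := (Real.sqrt 2 : ℂ) with hsq
  have hne : sq ≠ 0 := sqrt2c_ne
  have hsq2 : sq * sq = 2 := sqrt2c_sq
  rw [smul_smul, smul_smul]
  match_scalars
  · field_simp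
    linear_combination cc * hsq2
  · field_simp
    linear_combination ee * ss * hsq2

lemma natCast_end_apply (n : ℕ) (w : Fock) :
    ((n : Module.End ℂ Fock)) w = (n : ℂ) • w := by
  induction n with
  | zero => simp
  | succ n ih =>
    rw [Nat.cast_succ, LinearMap.add_apply, ih, Module.End.one_apply, Nat.cast_succ,
      add_smul, one_smul]

lemma coherent_expand (N : ℕ) (θ φ : ℝ) :
    coherent N θ φ = ((Real.sqrt N.factorial : ℂ))⁻¹ •
      ∑ k ∈ Finset.range (N + 1),
        (uc θ φ ^ k * vc θ φ ^ (N - k) * (N.choose k : ℂ)) • omg k (N - k) := by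
  unfold coherent
  rw [op_eq]
  congr 1
  have hcomm : Commute (uc θ φ • b1d) (vc θ φ • b2d) := by
    unfold Commute SemiconjBy
    rw [smul_mul_smul_comm, smul_mul_smul_comm, comm_b1d_b2d, mul_comm]
  rw [hcomm.add_pow]
  rw [LinearMap.sum_apply]
  apply Finset.sum_congr rfl
  intro k hk
  rw [smul_pow, smul_pow, Module.End.mul_apply, Module.End.mul_apply,
    natCast_end_apply, map_smul, map_smul, LinearMap.smul_apply, LinearMap.smul_apply,
    map_smul]
  rw [show (b1d ^ k) ((b2d ^ (N - k)) vacuum) = omg k (N - k) from rfl]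
  rw [smul_smul, smul_smul]
  congr 1
  ring

lemma finner_omg_coherent (N : ℕ) (θ φ : ℝ) (k : ℕ) (hk : k ≤ N) :
    finner (omg k (N - k)) (coherent N θ φ)
    = ((Real.sqrt N.factorial : ℂ))⁻¹ * (uc θ φ ^ k * vc θ φ ^ (N - k))
        * (N.choose k : ℂ) * ((k.factorial * (N - k).factorial : ℕ) : ℂ) := by
  rw [coherent_expand, finner_smul_right, finner_sum_right]
  rw [Finset.sum_eq_single k]
  · rw [finner_smul_right, finner_omg, if_pos ⟨rfl, rfl⟩]
    ring
  · intro j hj hne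
    rw [finner_smul_right, finner_omg]
    have : ¬(k = j ∧ N - k = N - j) := fun ⟨h1, _⟩ => hne h1.symm
    rw [if_neg this]
    simp
  · intro hk'
    exact absurd (Finset.mem_range.mpr (by omega)) hk'

/-! ### The N-particle subspace -/

lemma diag_sqrt (m1 : ℕ) (z : ℂ) :
    (Real.sqrt m1 : ℂ) * ((Real.sqrt (((m1 - 1 : ℕ) : ℝ) + 1) : ℂ) * z)
      = (m1 : ℂ) * z := by
  rcases Nat.eq_zero_or_pos m1 with h | h
  · subst h; simp
  · have h3 : (((m1 - 1 : ℕ) : ℝ) + 1) = (m1 : ℝ) := by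
      have : m1 - 1 + 1 = m1 := by omega
      exact_mod_cast congrArg (Nat.cast : ℕ → ℝ) this
    rw [h3, ← mul_assoc, sqrtc_mul_self]

lemma numOp_coeff (g : Fock) (m : ℕ × ℕ) :
    (numOp g) m = ((m.1 + m.2 : ℕ) : ℂ) * g m := by
  have h : numOp g = a1d (a1 g) + a2d (a2 g) := rfl
  rw [h, Finsupp.add_apply, a1d_apply_coe, a2d_apply_coe, a1_apply_coe, a2_apply_coe]
  rcases m with ⟨m1, m2⟩
  simp only
  rcases Nat.eq_zero_or_pos m1 with h1 | h1
  · subst h1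
    simp only [Nat.cast_zero, Real.sqrt_zero, Complex.ofReal_zero, zero_mul, zero_add]
    rcases Nat.eq_zero_or_pos m2 with h2 | h2
    · subst h2; simp
    · rw [show m2 - 1 + 1 = m2 by omega, diag_sqrt m2 (g (0, m2))]
  · rw [show m1 - 1 + 1 = m1 by omega, diag_sqrt m1 (g (m1, m2))]
    rcases Nat.eq_zero_or_pos m2 with h2 | h2
    · subst h2
      simp only [Nat.cast_zero, Real.sqrt_zero, Complex.ofReal_zero, zero_mul,
        add_zero, mul_zero]
    · rw [show m2 - 1 + 1 = m2 by omega, diag_sqrt m2 (g (m1, m2))]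
      push_cast
      ring

/-- the spanning singles of the N-particle sector -/
def gsing (N : ℕ) (j : Fin (N + 1)) : Fock := Finsupp.single (j.1, N - j.1) 1

lemma eigen_mem_span (N : ℕ) (g : Fock) (hg : numOp g = (N : ℂ) • g) :
    g ∈ Submodule.span ℂ (Set.range (gsing N)) := by
  have hco : ∀ m : ℕ × ℕ, g m ≠ 0 → m.1 + m.2 = N := by
    intro m hm
    have h1 : (numOp g) m = (N : ℂ) * g m := by
      rw [hg, Finsupp.smul_apply, smul_eq_mul]
    rw [numOp_coeff] at h1
    have h2 : ((m.1 + m.2 : ℕ) : ℂ) = (N : ℂ) := mul_right_cancel₀ hm h1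
    exact_mod_cast h2
  have hrep : g = ∑ m ∈ g.support, Finsupp.single m (g m) := by
    conv_lhs => rw [← Finsupp.sum_single g]
    rfl
  rw [hrep]
  apply Submodule.sum_mem
  intro m hm
  rcases m with ⟨x, y⟩
  have hmn : x + y = N := hco (x, y) (Finsupp.mem_support_iff.mp hm)
  have hs : Finsupp.single ((x : ℕ), (y : ℕ)) (g (x, y))
      = (g (x, y)) • Finsupp.single ((x : ℕ), (y : ℕ)) (1 : ℂ) := by
    rw [Finsupp.smul_single, smul_eq_mul, mul_one]
  rw [hs]
  apply Submodule.smul_mem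
  apply Submodule.subset_span
  refine ⟨⟨x, by omega⟩, ?_⟩
  unfold gsing
  have hy : N - x = y := by omega
  rw [hy]

lemma omg_mem (N k : ℕ) (hk : k ≤ N) :
    omg k (N - k) ∈ Submodule.span ℂ (Set.range (gsing N)) := by
  apply eigen_mem_span
  have := numOp_omg k (N - k)
  rwa [show k + (N - k) = N by omega] at this

/-- orthonormal eigenbasis vectors -/
def chi (N : ℕ) (k : Fin (N + 1)) : Fock :=
  ((Real.sqrt (k.1.factorial * (N - k.1).factorial) : ℂ))⁻¹ • omg k.1 (N - k.1)

lemma sqrt_fact_ne (a b : ℕ) :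
    (Real.sqrt ((a.factorial : ℝ) * b.factorial) : ℂ) ≠ 0 := by
  have hpos : (0 : ℝ) < (a.factorial : ℝ) * b.factorial := by
    have h1 := Nat.factorial_pos a
    have h2 := Nat.factorial_pos b
    positivity
  have : Real.sqrt ((a.factorial : ℝ) * b.factorial) ≠ 0 := by positivity
  exact Complex.ofReal_ne_zero.mpr this

lemma sqrt_fact_mul_self (a b : ℕ) :
    (Real.sqrt ((a.factorial : ℝ) * b.factorial) : ℂ)
      * (Real.sqrt ((a.factorial : ℝ) * b.factorial) : ℂ)
    = ((a.factorial * b.factorial : ℕ) : ℂ) := by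
  rw [← Complex.ofReal_mul, Real.mul_self_sqrt (by positivity)]
  push_cast
  ring

lemma finner_chi (N : ℕ) (k j : Fin (N + 1)) :
    finner (chi N k) (chi N j) = if k = j then 1 else 0 := by
  unfold chi
  rw [finner_smul_left, finner_smul_right, finner_omg, map_inv₀, Complex.conj_ofReal]
  by_cases h : k = j
  · subst h
    rw [if_pos ⟨rfl, rfl⟩, if_pos rfl]
    rw [← sqrt_fact_mul_self k.1 (N - k.1)]
    have hne := sqrt_fact_ne k.1 (N - k.1)
    rw [show ∀ z : ℂ, z⁻¹ * (z⁻¹ * (z * z)) = (z⁻¹ * z) * (z⁻¹ * z) from fun z => by ring,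
      inv_mul_cancel₀ hne, one_mul]
  · have hne : ¬(k.1 = j.1 ∧ N - k.1 = N - j.1) := fun ⟨h1, _⟩ => h (Fin.ext h1)
    rw [if_neg hne, if_neg h]
    simp

lemma chi_mem (N : ℕ) (k : Fin (N + 1)) :
    chi N k ∈ Submodule.span ℂ (Set.range (gsing N)) :=
  Submodule.smul_mem _ _ (omg_mem N k.1 (by omega))

lemma chi_li (N : ℕ) : LinearIndependent ℂ (chi N) := by
  rw [linearIndependent_iff']
  intro s g hsum i hi
  have h := congrArg (finner (chi N i)) hsum
  rw [finner_zero_right, finner_sum_right] at h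
  simp only [finner_smul_right, finner_chi, mul_ite, mul_one, mul_zero] at h
  rwa [Finset.sum_ite_eq s i g, if_pos hi] at h

lemma span_chi_eq (N : ℕ) :
    Submodule.span ℂ (Set.range (chi N)) = Submodule.span ℂ (Set.range (gsing N)) := by
  classical
  haveI : FiniteDimensional ℂ (Submodule.span ℂ (Set.range (gsing N))) :=
    FiniteDimensional.span_of_finite ℂ (Set.finite_range _)
  apply Submodule.eq_of_le_of_finrank_le
  · rw [Submodule.span_le]
    rintro x ⟨k, rfl⟩
    exact chi_mem N k
  · have h1 : Module.finrank ℂ (Submodule.span ℂ (Set.range (chi N))) = N + 1 := by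
      rw [finrank_span_eq_card (chi_li N)]
      simp
    have h2 : Module.finrank ℂ (Submodule.span ℂ (Set.range (gsing N))) ≤ N + 1 := by
      have := finrank_span_le_card (R := ℂ) (Set.range (gsing N))
      refine this.trans ?_
      rw [Set.toFinset_range]
      exact (Finset.card_image_le).trans (by simp)
    omega

lemma mem_span_chi (N : ℕ) (g : Fock) (hg : numOp g = (N : ℂ) • g) :
    ∃ c : Fin (N + 1) → ℂ, ∑ k, c k • chi N k = g := by
  rw [← Submodule.mem_span_range_iff_exists_fun]
  rw [span_chi_eq]
  exact eigen_mem_span N g hg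

/-! ### Eigendecomposition -/

lemma finner_sum_left {ι : Type*} (s : Finset ι) (f : Fock) (g : ι → Fock) :
    finner (∑ i ∈ s, g i) f = ∑ i ∈ s, finner (g i) f := by
  classical
  induction s using Finset.induction_on with
  | empty => simp [finner_zero_left]
  | @insert a t h ih => simp [Finset.sum_insert h, finner_add_left, ih]

lemma finner_chi_sum (N : ℕ) (j : Fin (N + 1)) (d : Fin (N + 1) → ℂ) :
    finner (chi N j) (∑ k, d k • chi N k) = d j := by
  rw [finner_sum_right]
  simp only [finner_smul_right, finner_chi, mul_ite, mul_one, mul_zero]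
  rw [Finset.sum_ite_eq Finset.univ j d, if_pos (Finset.mem_univ j)]

def lam (N : ℕ) (k : Fin (N + 1)) : ℂ := ((k.1 : ℂ) - ((N - k.1 : ℕ) : ℂ)) / 2

lemma Jx_chi (N : ℕ) (k : Fin (N + 1)) : Jx (chi N k) = lam N k • chi N k := by
  unfold chi lam
  rw [map_smul, Jx_omg, smul_smul, smul_smul, mul_comm]

lemma lam_inj (N : ℕ) (k j : Fin (N + 1)) (h : lam N k = lam N j) : k = j := by
  unfold lam at h
  have hk : k.1 ≤ N := by omega
  have hj : j.1 ≤ N := by omega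
  rw [Nat.cast_sub hk, Nat.cast_sub hj] at h
  have h2 : ((k.1 : ℕ) : ℂ) = ((j.1 : ℕ) : ℂ) := by
    field_simp at h
    linear_combination h / 2
  have h3 : (k.1 : ℕ) = j.1 := by exact_mod_cast h2
  exact Fin.ext h3

lemma eigen_decomp (N : ℕ) (J : ℝ) (hJ : J ≠ 0) (Ei : ℝ) (f : Fock)
    (hN : numOp f = (N : ℂ) • f)
    (hnorm : finner f f = 1)
    (heig : ((-(2 * J) : ℂ) • Jx) f = (Ei : ℂ) • f) :
    ∃ (k : Fin (N + 1)) (z : ℂ), f = z • chi N k ∧ Complex.normSq z = 1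
      ∧ Ei = J * ((N : ℝ) - 2 * k.1) := by
  classical
  obtain ⟨c, hc⟩ := mem_span_chi N f hN
  have hz : (-(2 * (J : ℂ))) ≠ 0 := by
    simp only [neg_ne_zero]
    exact mul_ne_zero two_ne_zero (Complex.ofReal_ne_zero.mpr hJ)
  set μ : ℂ := (Ei : ℂ) / (-(2 * (J : ℂ))) with hμdef
  have hJx : Jx f = μ • f := by
    have h1 : (-(2 * (J : ℂ))) • Jx f = (Ei : ℂ) • f := by
      have := heig
      rwa [LinearMap.smul_apply] at this
    have h2 := congrArg (fun w => (-(2 * (J : ℂ)))⁻¹ • w) h1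
    simp only [smul_smul, inv_mul_cancel₀ hz, one_smul] at h2
    rw [h2]
    congr 1
    rw [hμdef]
    ring
  have hcoef : ∀ j, c j * lam N j = μ * c j := by
    intro j
    have h1 : Jx (∑ k, c k • chi N k) = μ • (∑ k, c k • chi N k) := by
      rw [hc, hJx]
    rw [map_sum, Finset.smul_sum] at h1
    simp only [map_smul, Jx_chi, smul_smul] at h1
    have h2 := congrArg (finner (chi N j)) h1
    rw [finner_chi_sum, finner_chi_sum] at h2
    exact h2
  have hsum1 : (∑ j, (starRingEnd ℂ) (c j) * c j) = 1 := by
    rw [← hnorm]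
    conv_rhs => rw [← hc]
    rw [finner_sum_left]
    apply Finset.sum_congr rfl
    intro j _
    rw [finner_smul_left, finner_chi_sum]
  have hex : ∃ k0, c k0 ≠ 0 := by
    by_contra hno
    push_neg at hno
    rw [Finset.sum_eq_zero (fun j _ => by rw [hno j, mul_zero])] at hsum1
    exact one_ne_zero hsum1.symm
  obtain ⟨k0, hk0⟩ := hex
  have hμval : μ = lam N k0 := by
    have := hcoef k0
    have h2 : c k0 * lam N k0 = c k0 * μ := by rw [this, mul_comm]
    exact (mul_left_cancel₀ hk0 h2).symm
  have hzero : ∀ j, j ≠ k0 → c j = 0 := by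
    intro j hj
    by_contra hcj
    have h1 : c j * lam N j = c j * μ := by rw [hcoef j, mul_comm]
    have h2 : lam N j = μ := mul_left_cancel₀ hcj h1
    exact hj (lam_inj N j k0 (h2.trans hμval))
  have hf : f = c k0 • chi N k0 := by
    rw [← hc, Finset.sum_eq_single k0
      (fun j _ hj => by rw [hzero j hj, zero_smul])
      (fun h => absurd (Finset.mem_univ k0) h)]
  refine ⟨k0, c k0, hf, ?_, ?_⟩
  · have h1 : finner (c k0 • chi N k0) (c k0 • chi N k0) = 1 := by rw [← hf]; exact hnorm
    rw [finner_smul_left, finner_smul_right, finner_chi, if_pos rfl, mul_one] at h1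
    have h2 : ((Complex.normSq (c k0) : ℝ) : ℂ) = 1 := by
      rw [Complex.normSq_eq_conj_mul_self]
      exact h1
    exact_mod_cast h2
  · have hk : k0.1 ≤ N := by omega
    have h1 : (Ei : ℂ) = -(2 * (J : ℂ)) * lam N k0 := by
      rw [← hμval, hμdef]
      have hJc : (J : ℂ) ≠ 0 := Complex.ofReal_ne_zero.mpr hJ
      field_simp
    unfold lam at h1
    rw [Nat.cast_sub hk] at h1
    have h2 : (Ei : ℂ) = ((J * ((N : ℝ) - 2 * k0.1) : ℝ) : ℂ) := by
      rw [h1]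
      push_cast
      ring
    exact_mod_cast h2

/-! ### Norms of the coherent amplitudes -/

lemma exp_I_phi (φ : ℝ) :
    Complex.exp (Complex.I * φ) = (Real.cos φ : ℂ) + (Real.sin φ : ℂ) * Complex.I := by
  rw [mul_comm, Complex.exp_mul_I, Complex.ofReal_cos, Complex.ofReal_sin]

lemma normSq_sqrt2_inv : Complex.normSq ((Real.sqrt 2 : ℂ))⁻¹ = 1 / 2 := by
  rw [map_inv₀ Complex.normSq, Complex.normSq_ofReal,
    Real.mul_self_sqrt (by norm_num)]
  norm_num

lemma sin_double (θ : ℝ) : Real.sin θ = 2 * Real.sin (θ / 2) * Real.cos (θ / 2) := by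
  rw [← Real.sin_two_mul]
  congr 1
  ring

lemma normSq_uc (θ φ : ℝ) :
    Complex.normSq (uc θ φ) = (1 + Real.sin θ * Real.cos φ) / 2 := by
  unfold uc
  rw [exp_I_phi, Complex.normSq_mul, normSq_sqrt2_inv]
  have h2 : (Real.cos (θ/2) : ℂ)
        + ((Real.cos φ : ℂ) + (Real.sin φ : ℂ) * Complex.I) * (Real.sin (θ/2) : ℂ)
      = ((Real.cos (θ/2) + Real.cos φ * Real.sin (θ/2) : ℝ) : ℂ)
        + ((Real.sin φ * Real.sin (θ/2) : ℝ) : ℂ) * Complex.I := by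
    push_cast
    ring
  rw [h2, Complex.normSq_add_mul_I]
  have hsc := Real.sin_sq_add_cos_sq (θ/2)
  have hsc2 := Real.sin_sq_add_cos_sq φ
  have hdouble := sin_double θ
  linear_combination (1/2) * hsc + (Real.sin (θ/2)^2/2) * hsc2
    - (Real.cos φ/2) * hdouble

lemma normSq_vc (θ φ : ℝ) :
    Complex.normSq (vc θ φ) = (1 - Real.sin θ * Real.cos φ) / 2 := by
  unfold vc
  rw [exp_I_phi, Complex.normSq_mul, normSq_sqrt2_inv]
  have h2 : (Real.cos (θ/2) : ℂ)
        - ((Real.cos φ : ℂ) + (Real.sin φ : ℂ) * Complex.I) * (Real.sin (θ/2) : ℂ)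
      = ((Real.cos (θ/2) - Real.cos φ * Real.sin (θ/2) : ℝ) : ℂ)
        + ((-(Real.sin φ * Real.sin (θ/2)) : ℝ) : ℂ) * Complex.I := by
    push_cast
    ring
  rw [h2, Complex.normSq_add_mul_I]
  have hsc := Real.sin_sq_add_cos_sq (θ/2)
  have hsc2 := Real.sin_sq_add_cos_sq φ
  have hdouble := sin_double θ
  linear_combination (1/2) * hsc + (Real.sin (θ/2)^2/2) * hsc2
    + (Real.cos φ/2) * hdouble

lemma husimi_coeff (N : ℕ) (θ φ : ℝ) (k : Fin (N + 1)) :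
    Complex.normSq (finner (coherent N θ φ) (chi N k))
    = (N.choose k.1 : ℝ) * Complex.normSq (uc θ φ) ^ k.1
        * Complex.normSq (vc θ φ) ^ (N - k.1) := by
  unfold chi
  rw [finner_smul_right,
    finner_conj (coherent N θ φ) (omg k.1 (N - k.1)),
    finner_omg_coherent N θ φ k.1 (by omega)]
  simp only [Complex.normSq_mul, Complex.normSq_conj, map_pow, map_inv₀,
    Complex.normSq_ofReal, Complex.normSq_natCast]
  rw [Real.mul_self_sqrt (by positivity), Real.mul_self_sqrt (by positivity)]
  have hfact : ((N.choose k.1 : ℝ)) * ((k.1.factorial : ℝ) * ((N - k.1).factorial : ℝ))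
      = (N.factorial : ℝ) := by
    have h := Nat.choose_mul_factorial_mul_factorial (show k.1 ≤ N by omega)
    push_cast [← h]
    ring
  have hne1 : (k.1.factorial : ℝ) ≠ 0 := by positivity
  have hne2 : ((N - k.1).factorial : ℝ) ≠ 0 := by positivity
  have hne3 : (N.factorial : ℝ) ≠ 0 := by positivity
  push_cast
  field_simp
  linear_combination ((N.choose k.1 : ℝ) * Complex.normSq (uc θ φ) ^ k.1
    * Complex.normSq (vc θ φ) ^ (N - k.1)) * hfact

/-- closed form of the Husimi distribution of the canonical
ensemble for the noninteracting Hamiltonian `H = -2J Jx`.  Here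
`(E i, Φ i)` is any orthonormal eigenbasis of `H` on the N-particle subspace,
`ξ = e^{2βJ}`, and `cos θ̄ = sinθ cosφ` is the cosine of the angle between the
Bloch vector of `|Ψ^N_{θ,φ}⟩` and the x-axis. -/
theorem husimi_noninteracting (N : ℕ) (J β : ℝ) (hβJ : β * J ≠ 0) (θ φ : ℝ)
    (E : Fin (N + 1) → ℝ) (Φ : Fin (N + 1) → Fock)
    (hΦN : ∀ i, numOp (Φ i) = (N : ℂ) • Φ i)
    (hortho : ∀ i j, finner (Φ i) (Φ j) = if i = j then 1 else 0)
    (heig : ∀ i, ((-(2 * J) : ℂ) • Jx) (Φ i) = (E i : ℂ) • Φ i) :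
    (∑ i, Real.exp (-β * E i)
        * Complex.normSq (finner (coherent N θ φ) (Φ i)))
      / (∑ i, Real.exp (-β * E i))
    = ((Real.exp (2 * β * J) - 1) / (Real.exp (2 * β * J) ^ (N + 1) - 1))
        * ((1 + Real.exp (2 * β * J)
            + (Real.exp (2 * β * J) - 1) * (Real.sin θ * Real.cos φ)) / 2) ^ N := by
  classical
  have hJ : J ≠ 0 := fun h => hβJ (by rw [h, mul_zero])
  have hβ : β ≠ 0 := fun h => hβJ (by rw [h, zero_mul])
  set ξ := Real.exp (2 * β * J) with hξdef
  set w := Real.sin θ * Real.cos φ with hwdef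
  set u2 := Complex.normSq (uc θ φ) with hu2def
  set v2 := Complex.normSq (vc θ φ) with hv2def
  set e0 := Real.exp (-(β * J * N)) with he0def
  have hξpos : 0 < ξ := Real.exp_pos _
  have hξne1 : ξ ≠ 1 := by
    rw [hξdef, Ne, Real.exp_eq_one_iff]
    intro h
    exact hβJ (by linarith)
  have he0pos : 0 < e0 := Real.exp_pos _
  have hdec : ∀ i, ∃ (k : Fin (N + 1)) (z : ℂ), Φ i = z • chi N k
      ∧ Complex.normSq z = 1 ∧ E i = J * ((N : ℝ) - 2 * k.1) :=
    fun i => eigen_decomp N J hJ (E i) (Φ i) (hΦN i)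
      (by rw [hortho i i, if_pos rfl]) (heig i)
  choose σ z hΦeq hz hE using hdec
  have hznz : ∀ i, z i ≠ 0 := by
    intro i h
    have := hz i
    rw [h, map_zero] at this
    norm_num at this
  have hσinj : Function.Injective σ := by
    intro i j hij
    by_contra hne
    have h0 := hortho i j
    rw [if_neg hne, hΦeq i, hΦeq j, finner_smul_left, finner_smul_right, hij,
      finner_chi, if_pos rfl, mul_one] at h0
    rcases mul_eq_zero.mp h0 with h1 | h1
    · exact hznz i (by simpa using congrArg (starRingEnd ℂ) h1)
    · exact hznz j h1
  let e : Fin (N + 1) ≃ Fin (N + 1) :=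
    Equiv.ofBijective σ (Finite.injective_iff_bijective.mp hσinj)
  have hq : ∀ k : ℕ, Real.exp (-β * (J * ((N : ℝ) - 2 * k))) = ξ ^ k * e0 := by
    intro k
    rw [hξdef, he0def, ← Real.exp_nat_mul, ← Real.exp_add]
    congr 1
    ring
  have hterm : ∀ i, Real.exp (-β * E i)
      * Complex.normSq (finner (coherent N θ φ) (Φ i))
      = (fun k : Fin (N + 1) => ξ ^ k.1 * e0
          * ((N.choose k.1 : ℝ) * u2 ^ k.1 * v2 ^ (N - k.1))) (σ i) := by
    intro i
    rw [hE i, hq (σ i).1, hΦeq i, finner_smul_right, Complex.normSq_mul, hz i,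
      one_mul, husimi_coeff]
  have hterm2 : ∀ i, Real.exp (-β * E i)
      = (fun k : Fin (N + 1) => ξ ^ k.1 * e0) (σ i) := by
    intro i
    rw [hE i, hq (σ i).1]
  have hnum : (∑ i, Real.exp (-β * E i)
      * Complex.normSq (finner (coherent N θ φ) (Φ i)))
      = e0 * (ξ * u2 + v2) ^ N := by
    rw [Finset.sum_congr rfl (fun i _ => hterm i)]
    rw [show (∑ i, (fun k : Fin (N + 1) => ξ ^ k.1 * e0
          * ((N.choose k.1 : ℝ) * u2 ^ k.1 * v2 ^ (N - k.1))) (σ i))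
        = ∑ k : Fin (N + 1), ξ ^ k.1 * e0
          * ((N.choose k.1 : ℝ) * u2 ^ k.1 * v2 ^ (N - k.1)) from
      Equiv.sum_comp e (fun k : Fin (N + 1) => ξ ^ k.1 * e0
          * ((N.choose k.1 : ℝ) * u2 ^ k.1 * v2 ^ (N - k.1)))]
    rw [Fin.sum_univ_eq_sum_range
      (fun k => ξ ^ k * e0 * ((N.choose k : ℝ) * u2 ^ k * v2 ^ (N - k)))]
    rw [add_pow, Finset.mul_sum]
    apply Finset.sum_congr rfl
    intro k hk
    rw [mul_pow]
    ring
  have hden : (∑ i, Real.exp (-β * E i)) = e0 * ((ξ ^ (N + 1) - 1) / (ξ - 1)) := by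
    rw [Finset.sum_congr rfl (fun i _ => hterm2 i)]
    rw [show (∑ i, (fun k : Fin (N + 1) => ξ ^ k.1 * e0) (σ i))
        = ∑ k : Fin (N + 1), ξ ^ k.1 * e0 from
      Equiv.sum_comp e (fun k : Fin (N + 1) => ξ ^ k.1 * e0)]
    rw [Fin.sum_univ_eq_sum_range (fun k => ξ ^ k * e0)]
    rw [← Finset.sum_mul, geom_sum_eq hξne1]
    ring
  have hu2 : u2 = (1 + w) / 2 := normSq_uc θ φ
  have hv2 : v2 = (1 - w) / 2 := normSq_vc θ φ
  have hξm1 : ξ - 1 ≠ 0 := sub_ne_zero.mpr hξne1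
  have hξp : ξ ^ (N + 1) - 1 ≠ 0 := by
    rcases lt_trichotomy ξ 1 with h | h | h
    · have : ξ ^ (N + 1) < 1 := pow_lt_one₀ hξpos.le h (Nat.succ_ne_zero N)
      intro hc
      nlinarith
    · exact absurd h hξne1
    · have : 1 < ξ ^ (N + 1) := one_lt_pow₀ h (Nat.succ_ne_zero N)
      intro hc
      nlinarith
  rw [hnum, hden, hu2, hv2]
  rw [mul_div_mul_left _ _ (ne_of_gt he0pos)]
  rw [show ξ * ((1 + w) / 2) + (1 - w) / 2 = (1 + ξ + (ξ - 1) * w) / 2 by ring]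
  field_simp
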